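/- Let z ∈ ℕ satisfy z + 1 ≥ ⌈a₁/d⌉ and z ≤ a₁ − 2. Then Σ_{j=z+1}^{a₁−1} ε_j·(j·d − a₁) ≥ ((z+1)·d − a₁) · (⌊ω_{a₁−1}/a₁⌋ − ⌊ω_z/a₁⌋ − 1), where the sum is computed in ℤ. -/

import Mathlib

theorem stmt13
    (d : ℕ) (hd : 2 ≤ d)
    (a : Fin d → ℕ)
    (ha_pos : ∀ i, 0 < a i)
    (ha_mono : StrictMono a)
    (ha_gcd : Finset.univ.gcd a = 1)
    (a1 : ℕ) (ha1 : a1 = a ⟨0, by omega⟩)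
    (S : Set ℕ)
    (hS : S = {m : ℕ | ∃ c : Fin d → ℕ, m = ∑ i, c i * a i})
    (hmin : ∀ j : Fin d, ¬ ∃ c : Fin d → ℕ, c j = 0 ∧ a j = ∑ i, c i * a i)
    (F : ℕ) (hF : F ∉ S) (hFmax : ∀ m : ℕ, F < m → m ∈ S)
    (ω : ℕ → ℕ)
    (hω_mono : ∀ i j : ℕ, i < j → j < a1 → ω i < ω j)
    (hω_range : ω '' Set.Iio a1 = {w ∈ S | ¬ ∃ s ∈ S, s + a1 = w})
    (Q R : ℕ) (hQR : F + 1 = Q * a1 + R) (hR2 : 2 ≤ R) (hRa : R ≤ a1)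
    (I : ℕ → Set ℕ) (hI : ∀ k, I k = Set.Icc (k * a1) ((k + 1) * a1 - 1))
    (ε : ℕ → ℕ) (hε : ∀ j, ε j = {k : ℕ | k < Q ∧ (I k ∩ S).ncard = j}.ncard)
    (z : ℕ) (hz : ⌈(a1 : ℚ) / (d : ℚ)⌉ ≤ (z : ℤ) + 1) (hza : z ≤ a1 - 2)
    :
    (((z : ℤ) + 1) * (d : ℤ) - (a1 : ℤ)) *
        (((ω (a1 - 1) / a1 : ℕ) : ℤ) - ((ω z / a1 : ℕ) : ℤ) - 1)
      ≤ ∑ j ∈ Finset.Icc (z + 1) (a1 - 1), (ε j : ℤ) * ((j : ℤ) * (d : ℤ) - (a1 : ℤ)) := by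
  have ha1pos : 0 < a1 := by rw [ha1]; exact ha_pos _
  have ha1_2 : 2 ≤ a1 := by
    rcases Nat.lt_or_ge a1 2 with h | h
    · exfalso
      have h1 : a1 = 1 := by omega
      apply hF
      rw [hS]
      refine ⟨fun i => if i = ⟨0, by omega⟩ then F else 0, ?_⟩
      rw [Finset.sum_eq_single (⟨0, by omega⟩ : Fin d)]
      · simp [← ha1, h1]
      · intro b _ hb; simp [hb]
      · intro h; exact absurd (Finset.mem_univ _) h
    · exact h
  have hclosed : ∀ x ∈ S, ∀ u : ℕ, x + u * a1 ∈ S := by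
    intro x hx u
    rw [hS] at hx ⊢
    obtain ⟨c, rfl⟩ := hx
    refine ⟨fun i => c i + (if i = ⟨0, by omega⟩ then u else 0), ?_⟩
    have e : ∑ i, (c i + (if i = (⟨0, by omega⟩ : Fin d) then u else 0)) * a i
        = ∑ i, c i * a i + ∑ i, (if i = (⟨0, by omega⟩ : Fin d) then u else 0) * a i := by
      rw [← Finset.sum_add_distrib]
      exact Finset.sum_congr rfl (fun i _ => by ring)
    have e2 : ∑ i, (if i = (⟨0, by omega⟩ : Fin d) then u else 0) * a i = u * a1 := by
      rw [Finset.sum_eq_single (⟨0, by omega⟩ : Fin d)]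
      · simp [← ha1]
      · intro b _ hb; simp [hb]
      · intro h; exact absurd (Finset.mem_univ _) h
    rw [e, e2]
  have hωAp : ∀ i, i < a1 → ω i ∈ S ∧ ¬ ∃ s ∈ S, s + a1 = ω i := by
    intro i hi
    have h : ω i ∈ ω '' Set.Iio a1 := ⟨i, hi, rfl⟩
    rw [hω_range] at h
    exact ⟨h.1, h.2⟩
  have hmax : ω (a1 - 1) = F + a1 := by
    have hFS : F + a1 ∈ S := hFmax _ (by omega)
    have hFAp : F + a1 ∈ ω '' Set.Iio a1 := by
      rw [hω_range]
      refine ⟨hFS, ?_⟩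
      rintro ⟨s, hsS, hs⟩
      have : s = F := by omega
      exact hF (this ▸ hsS)
    obtain ⟨i, hi, hωi⟩ := hFAp
    simp only [Set.mem_Iio] at hi
    have hle : ω (a1 - 1) ≤ F + a1 := by
      by_contra hcon
      push_neg at hcon
      obtain ⟨_, hnot⟩ := hωAp (a1 - 1) (by omega)
      exact hnot ⟨ω (a1 - 1) - a1, hFmax _ (by omega), by omega⟩
    rcases Nat.lt_or_ge i (a1 - 1) with h | h
    · have := hω_mono i (a1 - 1) h (by omega)
      omega
    · have : i = a1 - 1 := by omega
      rw [← this, hωi]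
  have hdivtop : ω (a1 - 1) / a1 = Q + 1 := by
    have e : ω (a1 - 1) = (R - 1) + (Q + 1) * a1 := by
      rw [hmax, add_mul, one_mul]; omega
    rw [e, Nat.add_mul_div_right _ _ ha1pos, Nat.div_eq_of_lt (by omega)]
    omega
  have hres : ∀ i j, i < j → j < a1 → ω i % a1 ≠ ω j % a1 := by
    intro i j hij hj heq
    have hlt : ω i < ω j := hω_mono i j hij hj
    have ei := Nat.div_add_mod (ω i) a1
    have ej := Nat.div_add_mod (ω j) a1
    have hq : ω i / a1 < ω j / a1 := by
      rcases Nat.lt_or_ge (ω i / a1) (ω j / a1) with h | h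
      · exact h
      · exfalso
        have := Nat.mul_le_mul_left a1 h
        omega
    obtain ⟨u, hu⟩ : ∃ u, ω j / a1 = ω i / a1 + 1 + u := ⟨ω j / a1 - ω i / a1 - 1, by omega⟩
    obtain ⟨_, hnot⟩ := hωAp j hj
    refine hnot ⟨ω i + u * a1, hclosed _ (hωAp i (by omega)).1 u, ?_⟩
    have e2 : a1 * (ω j / a1) = a1 * (ω i / a1) + a1 * u + a1 := by rw [hu]; ring
    have e3 : u * a1 = a1 * u := mul_comm _ _
    omega
  have hmem : ∀ i, i < a1 → ∀ k, ω i / a1 ≤ k → k * a1 + ω i % a1 ∈ S := by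
    intro i hi k hk
    obtain ⟨u, hu⟩ : ∃ u, k = ω i / a1 + u := ⟨k - ω i / a1, by omega⟩
    have hx := hclosed _ (hωAp i hi).1 u
    have ei := Nat.div_add_mod (ω i) a1
    have e : k * a1 + ω i % a1 = ω i + u * a1 := by
      rw [hu, add_mul]
      have h1 : ω i / a1 * a1 = a1 * (ω i / a1) := mul_comm _ _
      omega
    rw [e]; exact hx
  have hz_lt : z < a1 := by omega
  -- lower bound on interval counts
  have hlow : ∀ k, ω z / a1 ≤ k → z + 1 ≤ (I k ∩ S).ncard := by
    intro k hk
    have hfin : (I k ∩ S).Finite := by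
      apply Set.Finite.inter_of_left
      rw [hI]; exact Set.finite_Icc _ _
    set g : ℕ → ℕ := fun i => k * a1 + ω i % a1 with hg
    have hinj : Set.InjOn g (Finset.range (z + 1) : Set ℕ) := by
      intro i hi j hj hij
      simp only [Finset.coe_range, Set.mem_Iio] at hi hj
      by_contra hne
      have hij' : ω i % a1 = ω j % a1 := by
        simp only [hg] at hij; omega
      rcases Nat.lt_or_ge i j with h | h
      · exact hres i j h (by omega) hij'
      · exact hres j i (by omega) (by omega) hij'.symm
    have hsub : ↑((Finset.range (z + 1)).image g) ⊆ I k ∩ S := by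
      intro x hx
      simp only [Finset.coe_image, Set.mem_image, Finset.coe_range, Set.mem_Iio] at hx
      obtain ⟨i, hi, rfl⟩ := hx
      have hi' : i < a1 := by omega
      constructor
      · rw [hI]
        have hmod := Nat.mod_lt (ω i) ha1pos
        have e2 : (k + 1) * a1 = k * a1 + a1 := by ring
        simp only [Set.mem_Icc, hg]
        omega
      · apply hmem i hi' k
        have hle : ω i ≤ ω z := by
          rcases Nat.lt_or_ge i z with h | h
          · exact le_of_lt (hω_mono i z h hz_lt)
          · have : i = z := by omega
            rw [this]
        exact le_trans (Nat.div_le_div_right hle) hk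
    calc z + 1 = ((Finset.range (z + 1)).image g).card := by
          rw [Finset.card_image_of_injOn hinj, Finset.card_range]
      _ = (↑((Finset.range (z + 1)).image g) : Set ℕ).ncard := (Set.ncard_coe_finset _).symm
      _ ≤ (I k ∩ S).ncard := Set.ncard_le_ncard hsub hfin
  -- upper bound on interval counts
  have hup : ∀ k, k < Q → (I k ∩ S).ncard ≤ a1 - 1 := by
    intro k hkQ
    have hxnot : k * a1 + (R - 1) ∉ S := by
      intro hxS
      apply hF
      obtain ⟨u, hu⟩ : ∃ u, Q = k + u := ⟨Q - k, by omega⟩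
      have h2 := hclosed _ hxS u
      have e : k * a1 + (R - 1) + u * a1 = F := by
        rw [hu, add_mul] at hQR
        omega
      rw [e] at h2; exact h2
    have e2 : (k + 1) * a1 = k * a1 + a1 := by ring
    have hxmem : k * a1 + (R - 1) ∈ Set.Icc (k * a1) ((k + 1) * a1 - 1) := by
      simp only [Set.mem_Icc]; omega
    have hsub2 : I k ∩ S ⊆ Set.Icc (k * a1) ((k + 1) * a1 - 1) \ {k * a1 + (R - 1)} := by
      rintro x ⟨hx1, hx2⟩
      rw [hI] at hx1
      refine ⟨hx1, ?_⟩
      simp only [Set.mem_singleton_iff]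
      rintro rfl
      exact hxnot hx2
    calc (I k ∩ S).ncard
        ≤ (Set.Icc (k * a1) ((k + 1) * a1 - 1) \ {k * a1 + (R - 1)}).ncard :=
          Set.ncard_le_ncard hsub2 ((Set.finite_Icc _ _).diff)
      _ = (Set.Icc (k * a1) ((k + 1) * a1 - 1)).ncard - 1 :=
          Set.ncard_diff_singleton_of_mem hxmem
      _ ≤ a1 - 1 := by
          rw [← Finset.coe_Icc, Set.ncard_coe_finset, Nat.card_Icc]
          omega
  -- the counting inequality
  have hcount : (Q : ℤ) - (ω z / a1 : ℕ) ≤ ∑ j ∈ Finset.Icc (z + 1) (a1 - 1), (ε j : ℤ) := by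
    have hnonneg : (0 : ℤ) ≤ ∑ j ∈ Finset.Icc (z + 1) (a1 - 1), (ε j : ℤ) :=
      Finset.sum_nonneg fun j _ => Int.natCast_nonneg _
    rcases Nat.lt_or_ge (ω z / a1) Q with hmQ | hmQ
    · have key : Q - ω z / a1 ≤ ∑ j ∈ Finset.Icc (z + 1) (a1 - 1), ε j := by
        set T : Finset ℕ := Finset.Ico (ω z / a1) Q with hT
        have hmaps : ∀ k ∈ T, (I k ∩ S).ncard ∈ Finset.Icc (z + 1) (a1 - 1) := by
          intro k hk
          rw [hT, Finset.mem_Ico] at hk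
          rw [Finset.mem_Icc]
          exact ⟨hlow k hk.1, hup k hk.2⟩
        have hcard := Finset.card_eq_sum_card_fiberwise hmaps
        have hfib : ∀ j ∈ Finset.Icc (z + 1) (a1 - 1),
            (T.filter (fun k => (I k ∩ S).ncard = j)).card ≤ ε j := by
          intro j _
          rw [hε]
          have hset : {k : ℕ | k < Q ∧ (I k ∩ S).ncard = j}
              = ↑((Finset.range Q).filter (fun k => (I k ∩ S).ncard = j)) := by
            ext k
            simp [Finset.mem_filter, Finset.mem_range]
          rw [hset, Set.ncard_coe_finset]
          apply Finset.card_le_card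
          intro k hk
          rw [Finset.mem_filter] at hk ⊢
          rw [hT, Finset.mem_Ico] at hk
          exact ⟨Finset.mem_range.mpr hk.1.2, hk.2⟩
        have : T.card = Q - ω z / a1 := by rw [hT, Nat.card_Ico]
        calc Q - ω z / a1 = T.card := this.symm
          _ = ∑ j ∈ Finset.Icc (z + 1) (a1 - 1),
                (T.filter (fun k => (I k ∩ S).ncard = j)).card := hcard
          _ ≤ ∑ j ∈ Finset.Icc (z + 1) (a1 - 1), ε j := Finset.sum_le_sum hfib
      have : ((Q - ω z / a1 : ℕ) : ℤ) ≤ ((∑ j ∈ Finset.Icc (z + 1) (a1 - 1), ε j : ℕ) : ℤ) :=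
        Int.ofNat_le.mpr key
      push_cast at this
      omega
    · omega
  -- c ≥ 0
  set c : ℤ := ((z : ℤ) + 1) * (d : ℤ) - (a1 : ℤ) with hc
  have hc0 : 0 ≤ c := by
    have hd0 : (0 : ℚ) < (d : ℚ) := by positivity
    have h1 : (a1 : ℚ) / (d : ℚ) ≤ (((z : ℤ) + 1 : ℤ) : ℚ) := Int.ceil_le.mp hz
    rw [div_le_iff₀ hd0] at h1
    push_cast at h1
    have h2 : (a1 : ℤ) ≤ ((z : ℤ) + 1) * (d : ℤ) := by exact_mod_cast h1
    omega
  have hterm : ∀ j ∈ Finset.Icc (z + 1) (a1 - 1),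
      c * (ε j : ℤ) ≤ (ε j : ℤ) * ((j : ℤ) * (d : ℤ) - (a1 : ℤ)) := by
    intro j hj
    rw [Finset.mem_Icc] at hj
    have hj1 : (z : ℤ) + 1 ≤ (j : ℤ) := by exact_mod_cast hj.1
    have hd1 : (1 : ℤ) ≤ (d : ℤ) := by exact_mod_cast Nat.one_le_of_lt hd
    have h1 : c ≤ (j : ℤ) * (d : ℤ) - (a1 : ℤ) := by
      rw [hc]
      nlinarith
    have h2 : (0 : ℤ) ≤ (ε j : ℤ) := Int.natCast_nonneg _
    calc c * (ε j : ℤ) = (ε j : ℤ) * c := mul_comm _ _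
      _ ≤ (ε j : ℤ) * ((j : ℤ) * (d : ℤ) - (a1 : ℤ)) := mul_le_mul_of_nonneg_left h1 h2
  calc c * (((ω (a1 - 1) / a1 : ℕ) : ℤ) - ((ω z / a1 : ℕ) : ℤ) - 1)
      = c * ((Q : ℤ) - ((ω z / a1 : ℕ) : ℤ)) := by
        rw [hdivtop]; push_cast; ring
    _ ≤ c * (∑ j ∈ Finset.Icc (z + 1) (a1 - 1), (ε j : ℤ)) :=
        mul_le_mul_of_nonneg_left hcount hc0
    _ = ∑ j ∈ Finset.Icc (z + 1) (a1 - 1), c * (ε j : ℤ) := Finset.mul_sum _ _ _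
    _ ≤ ∑ j ∈ Finset.Icc (z + 1) (a1 - 1), (ε j : ℤ) * ((j : ℤ) * (d : ℤ) - (a1 : ℤ)) :=
        Finset.sum_le_sum hterm
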